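/- Let t ∈ (0,1), K a positive integer, β₁,...,β_N distinct multi-indices in ℕ^K, and c₁,...,c_N complex numbers. Write t^{|β−μ|} := ∏_{j=1}^K t^{|β^{(j)} − μ^{(j)}|}. Then ∑_{k,ℓ=1}^N t^{|β_k − β_ℓ|} c_k conj(c_ℓ) = ∫_{𝕋^K} |∑_{j=1}^N c_j z^{β_j}|² P_K(t,z) dσ_K(z), where P_K(t,z) = ∏_{k=1}^K (1−t²)/|1 − t z_k|² is the Poisson kernel and σ_K is normalized Haar measure on the K-torus. In particular the quadratic form is nonnegative. -/

import Mathlib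

open MeasureTheory Finset Complex Real

noncomputable def ee (θ : ℝ) : ℂ := Complex.exp (2 * Real.pi * Complex.I * θ)

lemma norm_ee (θ : ℝ) : ‖ee θ‖ = 1 := by
  rw [ee, show (2 * (Real.pi:ℂ) * Complex.I * (θ:ℂ)) = ((2*Real.pi*θ : ℝ):ℂ) * Complex.I by
    push_cast; ring, Complex.norm_exp_ofReal_mul_I]

lemma ee_ne (θ : ℝ) : ee θ ≠ 0 := Complex.exp_ne_zero _

lemma conj_ee (θ : ℝ) : (starRingEnd ℂ) (ee θ) = (ee θ)⁻¹ :=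
  (Complex.inv_eq_conj (norm_ee θ)).symm

lemma orth (n : ℤ) : (∫ θ in Set.Icc (0:ℝ) 1, (ee θ) ^ n) = if n = 0 then 1 else 0 := by
  have h : ∀ θ : ℝ, (ee θ) ^ n = Complex.exp ((n * (2 * Real.pi * Complex.I)) * θ) := by
    intro θ
    rw [ee, ← Complex.exp_int_mul]
    congr 1
    ring
  simp_rw [h]
  rw [MeasureTheory.integral_Icc_eq_integral_Ioc,
    ← intervalIntegral.integral_of_le (zero_le_one (α := ℝ))]
  rcases eq_or_ne n 0 with hn | hn
  · simp [hn]
  · rw [if_neg hn]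
    have hc : (n : ℂ) * (2 * Real.pi * Complex.I) ≠ 0 := by
      apply mul_ne_zero
      · exact_mod_cast hn
      · simp [Real.pi_ne_zero, Complex.I_ne_zero]
    rw [integral_exp_mul_complex hc]
    simp [Complex.exp_int_mul_two_pi_mul_I]

lemma poissonHasSum {t : ℝ} (ht0 : 0 < t) (ht1 : t < 1) (θ : ℝ) :
    HasSum (fun m : ℤ => ((t ^ m.natAbs : ℝ) : ℂ) * (ee θ) ^ m)
      (((1 - t ^ 2) / ‖1 - (t : ℂ) * ee θ‖ ^ 2 : ℝ) : ℂ) := by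
  set z := ee θ with hz
  have hz1 : ‖z‖ = 1 := norm_ee θ
  have hz0 : z ≠ 0 := ee_ne θ
  have hn1 : ‖(t : ℂ) * z‖ < 1 := by
    rw [norm_mul, hz1, mul_one, Complex.norm_real, Real.norm_of_nonneg ht0.le]; exact ht1
  have hn2 : ‖(t : ℂ) * z⁻¹‖ < 1 := by
    rw [norm_mul, norm_inv, hz1, inv_one, mul_one, Complex.norm_real,
      Real.norm_of_nonneg ht0.le]; exact ht1
  have h1 : HasSum (fun m : ℕ => ((t : ℂ) * z) ^ m) (1 - (t : ℂ) * z)⁻¹ :=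
    hasSum_geometric_of_norm_lt_one hn1
  have h2 : HasSum (fun m : ℕ => ((t : ℂ) * z⁻¹) ^ (m + 1))
      (((t : ℂ) * z⁻¹) * (1 - (t : ℂ) * z⁻¹)⁻¹) := by
    simpa [pow_succ, mul_comm] using (hasSum_geometric_of_norm_lt_one hn2).mul_left ((t : ℂ) * z⁻¹)
  have h3 := h1.int_rec h2
  have hfun : (fun m : ℤ => ((t ^ m.natAbs : ℝ) : ℂ) * z ^ m)
      = fun m : ℤ => Int.rec (fun m : ℕ => ((t : ℂ) * z) ^ m)
          (fun m : ℕ => ((t : ℂ) * z⁻¹) ^ (m + 1)) m := by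
    funext m
    cases m with
    | ofNat m =>
        show ((t ^ m : ℝ) : ℂ) * z ^ (m : ℤ) = _
        rw [zpow_natCast]
        push_cast [mul_pow]
        ring
    | negSucc m =>
        show ((t ^ (m + 1) : ℝ) : ℂ) * z ^ (Int.negSucc m) = _
        rw [zpow_negSucc]
        push_cast [mul_pow, inv_pow]
        ring
  rw [hfun]
  convert h3 using 1
  have hd1 : (1 : ℂ) - t * z ≠ 0 := by
    intro h
    have : ‖(1 : ℂ)‖ = ‖(t:ℂ) * z‖ := by rw [show ((t:ℂ))*z = 1 from by linear_combination -h]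
    rw [norm_one] at this
    exact absurd (this ▸ hn1) (lt_irrefl _)
  have hd2 : (1 : ℂ) - t * z⁻¹ ≠ 0 := by
    intro h
    have : ‖(1 : ℂ)‖ = ‖(t:ℂ) * z⁻¹‖ := by rw [show ((t:ℂ))*z⁻¹ = 1 from by linear_combination -h]
    rw [norm_one] at this
    exact absurd (this ▸ hn2) (lt_irrefl _)
  have hcz : (starRingEnd ℂ) z = z⁻¹ := conj_ee θ
  have hns : ((‖1 - (t : ℂ) * z‖ ^ 2 : ℝ) : ℂ) = (1 - (t:ℂ)*z) * (1 - (t:ℂ)*z⁻¹) := by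
    have h4 : (‖1 - (t : ℂ) * z‖ ^ 2 : ℝ) = Complex.normSq (1 - (t:ℂ)*z) := by
      rw [Complex.sq_norm]
    rw [h4, ← Complex.mul_conj]
    congr 1
    rw [map_sub, map_one, map_mul, hcz, Complex.conj_ofReal]
  have hw : z * z⁻¹ = 1 := mul_inv_cancel₀ hz0
  rw [Complex.ofReal_div, hns]
  push_cast
  have ht0' : (t : ℂ) ≠ 0 := by exact_mod_cast ht0.ne'
  have hd3 : z - (t:ℂ) ≠ 0 := by
    intro h
    apply hd2
    have hz' : z = (t:ℂ) := by linear_combination h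
    rw [hz']
    field_simp
    norm_num
  rw [div_eq_iff (mul_ne_zero hd1 hd2)]
  field_simp [hd3]
  ring_nf

lemma cont_ee : Continuous ee := by
  unfold ee
  fun_prop

lemma cont_ee_zpow (m : ℤ) : Continuous fun θ : ℝ => (ee θ) ^ m :=
  cont_ee.zpow₀ m (fun θ => Or.inl (ee_ne θ))

lemma key1 {t : ℝ} (ht0 : 0 < t) (ht1 : t < 1) (n : ℤ) :
    (∫ θ in Set.Icc (0:ℝ) 1,
        (ee θ) ^ n * (((1 - t ^ 2) / ‖1 - (t : ℂ) * ee θ‖ ^ 2 : ℝ) : ℂ))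
      = ((t ^ n.natAbs : ℝ) : ℂ) := by
  set F : ℤ → ℝ → ℂ := fun m θ => ((t ^ m.natAbs : ℝ) : ℂ) * (ee θ) ^ (n + m) with hF
  have hsummable : Summable fun m : ℤ => t ^ m.natAbs := by
    apply Summable.of_nat_of_neg <;>
      simpa using summable_geometric_of_lt_one ht0.le ht1
  have hFcont : ∀ m : ℤ, Continuous (F m) := fun m =>
    continuous_const.mul (cont_ee_zpow (n + m))
  have hFint : ∀ m : ℤ, Integrable (F m) (volume.restrict (Set.Icc (0:ℝ) 1)) := fun m =>
    (hFcont m).integrableOn_Icc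
  have hFnorm : ∀ m : ℤ, (∫ θ in Set.Icc (0:ℝ) 1, ‖F m θ‖) = t ^ m.natAbs := by
    intro m
    have : ∀ θ : ℝ, ‖F m θ‖ = t ^ m.natAbs := by
      intro θ
      rw [hF]
      simp only [norm_mul, norm_zpow, norm_ee, one_zpow, mul_one, Complex.norm_real,
        Real.norm_of_nonneg (pow_nonneg ht0.le _)]
    simp_rw [this]
    rw [setIntegral_const]
    simp
  have hSig : HasSum (fun m : ℤ => ∫ θ in Set.Icc (0:ℝ) 1, F m θ)
      (∫ θ in Set.Icc (0:ℝ) 1, ∑' m : ℤ, F m θ) := by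
    apply hasSum_integral_of_summable_integral_norm hFint
    simp_rw [hFnorm]
    exact hsummable
  have hpt : ∀ θ : ℝ, ∑' m : ℤ, F m θ
      = (ee θ) ^ n * (((1 - t ^ 2) / ‖1 - (t : ℂ) * ee θ‖ ^ 2 : ℝ) : ℂ) := by
    intro θ
    have h := (poissonHasSum ht0 ht1 θ).mul_left ((ee θ) ^ n)
    have heq : (fun m : ℤ => (ee θ) ^ n * (((t ^ m.natAbs : ℝ) : ℂ) * (ee θ) ^ m))
        = fun m => F m θ := by
      funext m
      rw [hF]
      simp only
      rw [zpow_add₀ (ee_ne θ)]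
      ring
    rw [heq] at h
    exact h.tsum_eq
  simp_rw [← hpt]
  have hval : ∀ m : ℤ, (∫ θ in Set.Icc (0:ℝ) 1, F m θ)
      = if m = -n then ((t ^ n.natAbs : ℝ) : ℂ) else 0 := by
    intro m
    rw [hF]
    simp only
    rw [integral_const_mul, orth (n + m)]
    rcases eq_or_ne m (-n) with hm | hm
    · rw [if_pos hm, if_pos (by omega), mul_one]
      congr 2
      omega
    · rw [if_neg hm, if_neg (by omega), mul_zero]
  have h2 : HasSum (fun m : ℤ => ∫ θ in Set.Icc (0:ℝ) 1, F m θ) ((t ^ n.natAbs : ℝ) : ℂ) := by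
    simp_rw [hval]
    exact hasSum_ite_eq (-n) _
  exact hSig.unique h2

lemma fubini_Icc {K : ℕ} (f : Fin K → ℝ → ℂ) :
    (∫ θ in Set.Icc (0 : Fin K → ℝ) 1, ∏ j, f j (θ j))
      = ∏ j, ∫ x in Set.Icc (0:ℝ) 1, f j x := by
  have hset : Set.Icc (0 : Fin K → ℝ) 1 = Set.pi Set.univ fun _ : Fin K => Set.Icc (0:ℝ) 1 := by
    rw [Set.pi_univ_Icc]
    rfl
  rw [hset, ← MeasureTheory.integral_indicator (MeasurableSet.univ_pi fun _ => measurableSet_Icc)]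
  have hpt : ∀ θ : Fin K → ℝ,
      (Set.pi Set.univ fun _ : Fin K => Set.Icc (0:ℝ) 1).indicator
        (fun θ => ∏ j, f j (θ j)) θ
      = ∏ j, (Set.Icc (0:ℝ) 1).indicator (f j) (θ j) := by
    intro θ
    by_cases h : θ ∈ Set.pi Set.univ fun _ : Fin K => Set.Icc (0:ℝ) 1
    · rw [Set.indicator_of_mem h]
      exact Finset.prod_congr rfl fun j _ => (Set.indicator_of_mem (h j (Set.mem_univ j)) _).symm
    · rw [Set.indicator_of_notMem h]
      rw [Set.mem_univ_pi] at h
      push_neg at h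
      obtain ⟨j, hj⟩ := h
      exact (Finset.prod_eq_zero (Finset.mem_univ j) (Set.indicator_of_notMem hj _)).symm
  simp_rw [hpt]
  rw [MeasureTheory.volume_pi, MeasureTheory.integral_fintype_prod_eq_prod (ι := Fin K)
    (f := fun j x => (Set.Icc (0:ℝ) 1).indicator (f j) x)]
  exact Finset.prod_congr rfl fun j _ =>
    MeasureTheory.integral_indicator measurableSet_Icc

lemma my_integral_ofReal {X : Type*} [MeasurableSpace X] {μ : Measure X} {f : X → ℝ} :
    (∫ x, ((f x : ℝ) : ℂ) ∂μ) = ((∫ x, f x ∂μ : ℝ) : ℂ) :=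
  integral_ofReal

lemma one_sub_ne {t : ℝ} (ht0 : 0 < t) (ht1 : t < 1) (θ : ℝ) : (1:ℂ) - t * ee θ ≠ 0 := by
  intro h
  have h1 : (t:ℂ) * ee θ = 1 := by linear_combination -h
  have h2 : ‖(t:ℂ) * ee θ‖ = 1 := by rw [h1, norm_one]
  rw [norm_mul, norm_ee, mul_one, Complex.norm_real, Real.norm_of_nonneg ht0.le] at h2
  linarith

lemma cont_P {t : ℝ} (ht0 : 0 < t) (ht1 : t < 1) :
    Continuous fun x : ℝ => ((1 - t ^ 2) / ‖1 - (t : ℂ) * ee x‖ ^ 2 : ℝ) := by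
  apply Continuous.div continuous_const
  · exact ((continuous_const.sub (continuous_const.mul cont_ee)).norm).pow 2
  · intro x
    exact pow_ne_zero _ (norm_ne_zero_iff.mpr (one_sub_ne ht0 ht1 x))

theorem stmt6 (t : ℝ) (ht0 : 0 < t) (ht1 : t < 1) (K N : ℕ) (hK : 0 < K)
    (β : Fin N → Fin K → ℕ) (hβ : Function.Injective β) (c : Fin N → ℂ) :
    (∑ k, ∑ l,
        ((∏ j, t ^ (Int.natAbs ((β k j : ℤ) - (β l j : ℤ)))) : ℝ) * (c k * (starRingEnd ℂ) (c l)))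
      = ((∫ θ in Set.Icc (0 : Fin K → ℝ) 1,
            ‖∑ i, c i * ∏ j, Complex.exp (2 * Real.pi * Complex.I * θ j) ^ (β i j)‖ ^ 2
              * ∏ j, (1 - t ^ 2) / ‖1 - (t : ℂ) * Complex.exp (2 * Real.pi * Complex.I * θ j)‖ ^ 2) : ℝ)
    ∧ 0 ≤ ∫ θ in Set.Icc (0 : Fin K → ℝ) 1,
            ‖∑ i, c i * ∏ j, Complex.exp (2 * Real.pi * Complex.I * θ j) ^ (β i j)‖ ^ 2
              * ∏ j, (1 - t ^ 2) / ‖1 - (t : ℂ) * Complex.exp (2 * Real.pi * Complex.I * θ j)‖ ^ 2 := by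
  have hee : ∀ x : ℝ, Complex.exp (2 * Real.pi * Complex.I * x) = ee x := fun _ => rfl
  refine ⟨?_, integral_nonneg fun θ => mul_nonneg (by positivity)
    (Finset.prod_nonneg fun j _ => div_nonneg (by nlinarith) (by positivity))⟩
  simp_rw [hee]
  set T : Fin N → Fin N → (Fin K → ℝ) → ℂ := fun k l θ =>
    (c k * (starRingEnd ℂ) (c l)) * ∏ j, ((ee (θ j)) ^ ((β k j : ℤ) - (β l j : ℤ))
      * (((1 - t ^ 2) / ‖1 - (t : ℂ) * ee (θ j)‖ ^ 2 : ℝ) : ℂ)) with hT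
  have hTcont : ∀ k l, Continuous (T k l) := by
    intro k l
    apply continuous_const.mul
    apply continuous_finset_prod
    intro j _
    exact ((cont_ee_zpow _).comp (continuous_apply j)).mul
      (Complex.continuous_ofReal.comp ((cont_P ht0 ht1).comp (continuous_apply j)))
  have hTint : ∀ k l : Fin N, Integrable (T k l)
      (volume.restrict (Set.Icc (0 : Fin K → ℝ) 1)) := fun k l =>
    (hTcont k l).continuousOn.integrableOn_compact isCompact_Icc
  have hpoint : ∀ θ : Fin K → ℝ,
      ((‖∑ i, c i * ∏ j, ee (θ j) ^ (β i j)‖ ^ 2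
          * ∏ j, (1 - t ^ 2) / ‖1 - (t : ℂ) * ee (θ j)‖ ^ 2 : ℝ) : ℂ)
        = ∑ k, ∑ l, T k l θ := by
    intro θ
    rw [Complex.ofReal_mul]
    set S := ∑ i, c i * ∏ j, ee (θ j) ^ (β i j) with hS
    have h1 : ((‖S‖ ^ 2 : ℝ) : ℂ) = S * (starRingEnd ℂ) S := by
      rw [Complex.sq_norm, Complex.mul_conj]
    rw [h1, Complex.ofReal_prod]
    have hconjS : (starRingEnd ℂ) S = ∑ l, (starRingEnd ℂ) (c l) * ∏ j, ((ee (θ j))⁻¹) ^ (β l j) := by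
      rw [hS, map_sum]
      refine Finset.sum_congr rfl fun l _ => ?_
      rw [map_mul, map_prod]
      congr 1
      exact Finset.prod_congr rfl fun j _ => by rw [map_pow, conj_ee]
    calc S * (starRingEnd ℂ) S
          * ∏ j, (((1 - t ^ 2) / ‖1 - (t : ℂ) * ee (θ j)‖ ^ 2 : ℝ) : ℂ)
        = (∑ k, c k * ∏ j, ee (θ j) ^ (β k j))
            * (∑ l, (starRingEnd ℂ) (c l) * ∏ j, ((ee (θ j))⁻¹) ^ (β l j))
            * ∏ j, (((1 - t ^ 2) / ‖1 - (t : ℂ) * ee (θ j)‖ ^ 2 : ℝ) : ℂ) := by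
          rw [hconjS, hS]
      _ = ∑ k, ∑ l, T k l θ := by
          rw [Finset.sum_mul_sum, Finset.sum_mul]
          refine Finset.sum_congr rfl fun k _ => ?_
          rw [Finset.sum_mul]
          refine Finset.sum_congr rfl fun l _ => ?_
          rw [hT]
          simp only
          have hj : ∀ j : Fin K, ee (θ j) ^ ((β k j : ℤ) - (β l j : ℤ))
              * (((1 - t ^ 2) / ‖1 - (t : ℂ) * ee (θ j)‖ ^ 2 : ℝ) : ℂ)
              = (ee (θ j) ^ (β k j) * ((ee (θ j))⁻¹) ^ (β l j))
                * (((1 - t ^ 2) / ‖1 - (t : ℂ) * ee (θ j)‖ ^ 2 : ℝ) : ℂ) := by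
            intro j
            rw [zpow_sub₀ (ee_ne _), div_eq_mul_inv, zpow_natCast, zpow_natCast, inv_pow]
          simp_rw [hj]
          rw [Finset.prod_mul_distrib, Finset.prod_mul_distrib]
          ring
  rw [← my_integral_ofReal]
  simp_rw [hpoint]
  rw [MeasureTheory.integral_finset_sum _
    (fun k _ => integrable_finset_sum _ (fun l _ => hTint k l))]
  refine Finset.sum_congr rfl fun k _ => ?_
  rw [MeasureTheory.integral_finset_sum _ (fun l _ => hTint k l)]
  refine Finset.sum_congr rfl fun l _ => ?_
  rw [hT]
  simp only
  rw [integral_const_mul,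
    fubini_Icc (fun j x => (ee x) ^ ((β k j : ℤ) - (β l j : ℤ))
      * (((1 - t ^ 2) / ‖1 - (t : ℂ) * ee x‖ ^ 2 : ℝ) : ℂ))]
  simp_rw [key1 ht0 ht1]
  rw [← Complex.ofReal_prod]
  ring
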